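/- Assume 0 < μν < λ²m². Every global minimizer of V, i.e. every z ∈ ℂ⁵ with V(z) = 2μνm² − μ²ν²/λ², satisfies z₄ ≠ 0 and z₅ ≠ 0 (indeed equality forces z₄z₅ = m² − μν/λ² ≠ 0); hence the R-symmetry, under which z₄ and z₅ carry nonzero R-charges, is spontaneously broken at every point of the vacuum space. -/

import Mathlib

set_option maxHeartbeats 2000000

open Complex Filter Topology ContinuousLinearMap

/-- CDFM model with `0 < μν < λ²m²`. Every global minimizer of `V`, i.e.
every `z ∈ ℂ⁵` with `V(z) = 2μνm² − μ²ν²/λ²`, satisfies `z₄ ≠ 0` and `z₅ ≠ 0` (indeed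
equality forces `z₄z₅ = m² − μν/λ² ≠ 0`); hence the R-symmetry, under which `z₄` and `z₅`
carry nonzero R-charges, is spontaneously broken at every point of the vacuum space. -/
theorem cdfm_R_broken_on_all_vacua
    (lam mu nu m sig : ℝ)
    (hlam : 0 < lam) (hmu : 0 < mu) (hnu : 0 < nu) (hm : 0 < m) (hsig : 0 < sig)
    (hcond : mu * nu < lam ^ 2 * m ^ 2)
    (W : (Fin 5 → ℂ) → ℂ)
    (hW : ∀ z, W z = (lam : ℂ) * z 0 * (z 3 * z 4 - (m : ℂ) ^ 2) +
      (mu : ℂ) * z 1 * z 3 + (nu : ℂ) * z 2 * z 4 + (sig : ℂ) * (z 4) ^ 3)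
    (V : (Fin 5 → ℂ) → ℝ)
    (hV : ∀ z, V z = ∑ i, ‖fderiv ℂ W z (Pi.single i 1)‖ ^ 2) :
    ∀ z : Fin 5 → ℂ, V z = 2 * mu * nu * m ^ 2 - mu ^ 2 * nu ^ 2 / lam ^ 2 →
      z 3 ≠ 0 ∧ z 4 ≠ 0 ∧
      z 3 * z 4 = ((m ^ 2 - mu * nu / lam ^ 2 : ℝ) : ℂ) ∧
      ((m ^ 2 - mu * nu / lam ^ 2 : ℝ) : ℂ) ≠ 0 := by
  intro z hz
  -- basic positivity facts
  have hlam2 : (0:ℝ) < lam ^ 2 := by positivity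
  have hTpos : (0:ℝ) < m ^ 2 - mu * nu / lam ^ 2 := by
    rw [sub_pos, div_lt_iff₀ hlam2]; nlinarith
  have hTne : ((m ^ 2 - mu * nu / lam ^ 2 : ℝ) : ℂ) ≠ 0 :=
    Complex.ofReal_ne_zero.mpr hTpos.ne'
  -- rewrite W as an explicit power-free function
  have hWfun : W = fun w : Fin 5 → ℂ => (lam : ℂ) * w 0 * (w 3 * w 4 - (m : ℂ) ^ 2) +
      (mu : ℂ) * w 1 * w 3 + (nu : ℂ) * w 2 * w 4 + (sig : ℂ) * (w 4 * w 4 * w 4) := by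
    funext w; rw [hW]; ring
  subst hWfun
  -- compute the derivative
  have h0 : HasFDerivAt (fun w : Fin 5 → ℂ => w 0) (proj 0 : (Fin 5 → ℂ) →L[ℂ] ℂ) z := hasFDerivAt_apply 0 z
  have h1 : HasFDerivAt (fun w : Fin 5 → ℂ => w 1) (proj 1 : (Fin 5 → ℂ) →L[ℂ] ℂ) z := hasFDerivAt_apply 1 z
  have h2 : HasFDerivAt (fun w : Fin 5 → ℂ => w 2) (proj 2 : (Fin 5 → ℂ) →L[ℂ] ℂ) z := hasFDerivAt_apply 2 z
  have h3 : HasFDerivAt (fun w : Fin 5 → ℂ => w 3) (proj 3 : (Fin 5 → ℂ) →L[ℂ] ℂ) z := hasFDerivAt_apply 3 z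
  have h4 : HasFDerivAt (fun w : Fin 5 → ℂ => w 4) (proj 4 : (Fin 5 → ℂ) →L[ℂ] ℂ) z := hasFDerivAt_apply 4 z
  have hw := ((((h0.const_mul (lam:ℂ)).mul ((h3.mul h4).sub_const ((m:ℂ)^2))).add
      ((h1.const_mul (mu:ℂ)).mul h3)).add
      ((h2.const_mul (nu:ℂ)).mul h4)).add
      (((h4.mul h4).mul h4).const_mul (sig:ℂ))
  have hfd : fderiv ℂ (fun w : Fin 5 → ℂ => (lam : ℂ) * w 0 * (w 3 * w 4 - (m : ℂ) ^ 2) +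
      (mu : ℂ) * w 1 * w 3 + (nu : ℂ) * w 2 * w 4 + (sig : ℂ) * (w 4 * w 4 * w 4)) z = _ := hw.fderiv
  have happ0 : fderiv ℂ (fun w : Fin 5 → ℂ => (lam : ℂ) * w 0 * (w 3 * w 4 - (m : ℂ) ^ 2) +
      (mu : ℂ) * w 1 * w 3 + (nu : ℂ) * w 2 * w 4 + (sig : ℂ) * (w 4 * w 4 * w 4)) z
      (Pi.single 0 1) = (lam:ℂ) * (z 3 * z 4 - (m:ℂ)^2) := by
    rw [hfd]; simp [Pi.single_apply]; ring
  have happ1 : fderiv ℂ (fun w : Fin 5 → ℂ => (lam : ℂ) * w 0 * (w 3 * w 4 - (m : ℂ) ^ 2) +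
      (mu : ℂ) * w 1 * w 3 + (nu : ℂ) * w 2 * w 4 + (sig : ℂ) * (w 4 * w 4 * w 4)) z
      (Pi.single 1 1) = (mu:ℂ) * z 3 := by
    rw [hfd]; simp [Pi.single_apply]; ring
  have happ2 : fderiv ℂ (fun w : Fin 5 → ℂ => (lam : ℂ) * w 0 * (w 3 * w 4 - (m : ℂ) ^ 2) +
      (mu : ℂ) * w 1 * w 3 + (nu : ℂ) * w 2 * w 4 + (sig : ℂ) * (w 4 * w 4 * w 4)) z
      (Pi.single 2 1) = (nu:ℂ) * z 4 := by
    rw [hfd]; simp [Pi.single_apply]; ring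
  -- the main sum equation
  have hsum := (hV z).symm.trans hz
  rw [Fin.sum_univ_five, happ0, happ1, happ2] at hsum
  -- abbreviations
  set r : ℝ := ‖z 3 * z 4 - (m:ℂ)^2‖ with hrdef
  set x : ℝ := ‖z 3‖ with hxdef
  set y : ℝ := ‖z 4‖ with hydef
  set n3 : ℝ := ‖(fderiv ℂ (fun w : Fin 5 → ℂ => (lam : ℂ) * w 0 * (w 3 * w 4 - (m : ℂ) ^ 2) +
      (mu : ℂ) * w 1 * w 3 + (nu : ℂ) * w 2 * w 4 + (sig : ℂ) * (w 4 * w 4 * w 4)) z)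
      (Pi.single 3 1)‖ ^ 2 with hn3def
  set n4 : ℝ := ‖(fderiv ℂ (fun w : Fin 5 → ℂ => (lam : ℂ) * w 0 * (w 3 * w 4 - (m : ℂ) ^ 2) +
      (mu : ℂ) * w 1 * w 3 + (nu : ℂ) * w 2 * w 4 + (sig : ℂ) * (w 4 * w 4 * w 4)) z)
      (Pi.single 4 1)‖ ^ 2 with hn4def
  have en0 : ‖(lam:ℂ) * (z 3 * z 4 - (m:ℂ)^2)‖ ^ 2 = lam^2 * r^2 := by
    rw [norm_mul, Complex.norm_real, Real.norm_eq_abs, abs_of_pos hlam]; ring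
  have en1 : ‖(mu:ℂ) * z 3‖ ^ 2 = mu^2 * x^2 := by
    rw [norm_mul, Complex.norm_real, Real.norm_eq_abs, abs_of_pos hmu]; ring
  have en2 : ‖(nu:ℂ) * z 4‖ ^ 2 = nu^2 * y^2 := by
    rw [norm_mul, Complex.norm_real, Real.norm_eq_abs, abs_of_pos hnu]; ring
  rw [en0, en1, en2] at hsum
  have hn3 : (0:ℝ) ≤ n3 := by positivity
  have hn4 : (0:ℝ) ≤ n4 := by positivity
  clear_value n3 n4
  clear hfd hw happ0 happ1 happ2 h0 h1 h2 h3 h4 hV hW hz hn3def hn4def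
  -- multiplied-through version of hsum
  have hz2 : lam^2 * (lam^2 * r^2 + mu^2 * x^2 + nu^2 * y^2 + n3 + n4)
      = 2 * mu * nu * m^2 * lam^2 - mu^2 * nu^2 := by
    rw [hsum]; field_simp
  have key2 : lam^4 * (r^2 - (x*y - m^2)^2) + lam^2 * (mu*x - nu*y)^2
      + (lam^2 * (x*y - m^2) + mu*nu)^2 + lam^2 * n3 + lam^2 * n4 = 0 := by
    linear_combination hz2
  -- norm inequality: r ≥ |x*y - m^2|
  have hnormm : ‖((m:ℂ))^2‖ = m^2 := by
    rw [norm_pow, Complex.norm_real, Real.norm_eq_abs, abs_of_pos hm]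
  have hxy : ‖z 3 * z 4‖ = x * y := norm_mul _ _
  have hr2 : (x*y - m^2)^2 ≤ r^2 := by
    have h := abs_norm_sub_norm_le (z 3 * z 4) ((m:ℂ)^2)
    rw [hxy, hnormm, ← hrdef] at h
    have h' := abs_le.mp h
    exact sq_le_sq' h'.1 h'.2
  -- extract the equalities
  have hlam4 : (0:ℝ) < lam^4 := by positivity
  have hA : (0:ℝ) ≤ lam^4 * (r^2 - (x*y - m^2)^2) :=
    mul_nonneg hlam4.le (by linarith only [hr2])
  have hB : (0:ℝ) ≤ lam^2 * (mu*x - nu*y)^2 := by positivity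
  have hC : (0:ℝ) ≤ (lam^2 * (x*y - m^2) + mu*nu)^2 := sq_nonneg _
  have hn3' : (0:ℝ) ≤ lam^2 * n3 := mul_nonneg hlam2.le hn3
  have hn4' : (0:ℝ) ≤ lam^2 * n4 := mul_nonneg hlam2.le hn4
  have e3 : lam^2 * (x*y - m^2) + mu*nu = 0 := by
    have heq : (lam^2 * (x*y - m^2) + mu*nu)^2 = 0 := by
      linarith only [key2, hA, hB, hn3', hn4', hC]
    exact pow_eq_zero_iff two_ne_zero |>.mp heq
  have hreq : r^2 = (x*y - m^2)^2 := by
    have hA0 : lam^4 * (r^2 - (x*y - m^2)^2) ≤ 0 := by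
      linarith only [key2, hB, hC, hn3', hn4']
    have hA1 : lam^4 * (r^2 - (x*y - m^2)^2) = 0 := le_antisymm hA0 hA
    rcases mul_eq_zero.mp hA1 with h | h
    · exact absurd h (by positivity)
    · linarith only [h]
  -- x*y = T
  have hxyT : x * y = m^2 - mu*nu/lam^2 := by
    field_simp
    linear_combination e3
  -- now determine z3*z4 exactly
  set c : ℂ := z 3 * z 4 with hcdef
  have hnormc : ‖c‖ = x * y := hxy
  have nc : c.re * c.re + c.im * c.im = (x*y)^2 := by
    have : Complex.normSq c = ‖c‖^2 := (Complex.sq_norm c).symm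
    rw [Complex.normSq_apply] at this
    rw [this, hnormc]
  have nd : (c.re - m^2) * (c.re - m^2) + c.im * c.im = (x*y - m^2)^2 := by
    have h1 : Complex.normSq (c - (m:ℂ)^2) = ‖c - (m:ℂ)^2‖^2 := (Complex.sq_norm _).symm
    rw [Complex.normSq_apply] at h1
    simp only [Complex.sub_re, Complex.sub_im] at h1
    have h2 : ((m:ℂ)^2).re = m^2 := by
      rw [← Complex.ofReal_pow, Complex.ofReal_re]
    have h3 : ((m:ℂ)^2).im = 0 := by
      rw [← Complex.ofReal_pow, Complex.ofReal_im]
    rw [h2, h3, sub_zero] at h1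
    rw [h1, ← hrdef, hreq]
  have hre : c.re = x * y := by
    have h6 : m^2 * (c.re - x*y) = 0 := by linear_combination (nc - nd) / 2
    have hm2 : (m:ℝ)^2 ≠ 0 := by positivity
    rcases mul_eq_zero.mp h6 with h | h
    · exact absurd h hm2
    · linarith only [h]
  have him : c.im = 0 := by
    have h7 : c.im * c.im = 0 := by linear_combination nc - (c.re + x*y) * hre
    exact mul_self_eq_zero.mp h7
  have hc : c = ((m ^ 2 - mu * nu / lam ^ 2 : ℝ) : ℂ) := by
    apply Complex.ext
    · rw [hre, hxyT, Complex.ofReal_re]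
    · rw [him, Complex.ofReal_im]
  refine ⟨?_, ?_, hc, hTne⟩
  · intro h; rw [hcdef, h, zero_mul] at hc; exact hTne hc.symm
  · intro h; rw [hcdef, h, mul_zero] at hc; exact hTne hc.symm
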